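/- Poincaré-type inequality for measurable cells: Let (M, d, vol) be a metric measure space, 0 < ε < r, and V ⊂ M a measurable set with diameter ≤ ε and vol(V) = μ > 0. Suppose vol(B_{r−ε}(x)) ≥ c (r − ε)^n for all x ∈ V (for some constant c > 0). Let f ∈ L²(M) and a = μ^{-1} ∫_V f. Then ∫_V |f(x) − a|² dx ≤ (c (r−ε)^n)^{-1} ∫_V ∫_{B_r(x)} |f(y) − f(x)|² dy dx. -/

import Mathlib

open MeasureTheory Metric

lemma integral_sub_const_sq_aux {M : Type*} [MeasurableSpace M] (ν : Measure M)
    [IsFiniteMeasure ν] (f : M → ℝ) (h1 : Integrable f ν)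
    (h2 : Integrable (fun x => f x ^ 2) ν) (t : ℝ) :
    ∫ y, (f y - t) ^ 2 ∂ν
      = (∫ y, f y ^ 2 ∂ν) - 2 * t * (∫ y, f y ∂ν) + (ν Set.univ).toReal * t ^ 2 := by
  have h : (fun y => (f y - t) ^ 2) = fun y => (f y ^ 2 - (2 * t) * f y) + t ^ 2 :=
    funext fun y => by ring
  have hsub : Integrable (fun y => f y ^ 2 - (2 * t) * f y) ν := h2.sub (h1.const_mul _)
  rw [h, integral_add hsub (integrable_const _),
    integral_sub h2 (h1.const_mul _), integral_const_mul, integral_const, smul_eq_mul,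
    measureReal_def]

/-- Poincaré-type inequality for measurable cells: let `(M, d, vol)` be a metric measure
space, `0 < ε < r`, and `V ⊆ M` a measurable set of diameter at most `ε` with
`vol V = μ > 0`.  Suppose `vol (B_{r−ε}(x)) ≥ c (r − ε)ⁿ` for all `x ∈ V`.  Then, with
`a = μ⁻¹ ∫_V f` the mean of `f` on `V`,
`∫_V |f − a|² ≤ (c (r−ε)ⁿ)⁻¹ ∫_V ∫_{B_r(x)} |f(y) − f(x)|² dy dx`. -/
theorem poincare_type_inequality
    {M : Type*} [MetricSpace M] [MeasurableSpace M] [BorelSpace M]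
    (vol : Measure M) (n : ℕ) (c ε r : ℝ) (hc : 0 < c) (hε : 0 < ε) (hεr : ε < r)
    (V : Set M) (hVmeas : MeasurableSet V)
    (hVdiam : ∀ x ∈ V, ∀ y ∈ V, dist x y ≤ ε)
    (hVfin : vol V < ⊤)
    (μ : ℝ) (hμ : μ = (vol V).toReal) (hμpos : 0 < μ)
    (hvol : ∀ x ∈ V, c * (r - ε) ^ n ≤ (vol (ball x (r - ε))).toReal)
    (hvolfin : ∀ x ∈ V, vol (ball x r) < ⊤)
    (f : M → ℝ) (hf : MemLp f 2 vol)
    (hint : Integrable (fun x => ∫ y in ball x r, (f y - f x) ^ 2 ∂vol) (vol.restrict V))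
    (a : ℝ) (ha : a = μ⁻¹ * ∫ x in V, f x ∂vol) :
    ∫ x in V, (f x - a) ^ 2 ∂vol
      ≤ (c * (r - ε) ^ n)⁻¹ * ∫ x in V, ∫ y in ball x r, (f y - f x) ^ 2 ∂vol ∂vol := by
  have hrε : 0 < r - ε := by linarith
  have hcpos : 0 < c * (r - ε) ^ n := by positivity
  -- V is nonempty
  have hVne : V.Nonempty := by
    rcases V.eq_empty_or_nonempty with h | h
    · exfalso; rw [h] at hμ; simp at hμ; linarith
    · exact h
  obtain ⟨x₀, hx₀⟩ := hVne
  set W := ball x₀ (r - ε) with hWdef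
  have hWsub : ∀ x ∈ V, W ⊆ ball x r := by
    intro x hx y hy
    have h1 : dist y x₀ < r - ε := mem_ball.mp hy
    have h2 : dist x₀ x ≤ ε := hVdiam x₀ hx₀ x hx
    have h3 : dist y x ≤ dist y x₀ + dist x₀ x := dist_triangle _ _ _
    exact mem_ball.mpr (by linarith)
  have hWfin : vol W < ⊤ := lt_of_le_of_lt (measure_mono (hWsub x₀ hx₀)) (hvolfin x₀ hx₀)
  haveI : IsFiniteMeasure (vol.restrict V) := ⟨by rwa [Measure.restrict_apply_univ]⟩
  haveI : IsFiniteMeasure (vol.restrict W) := ⟨by rwa [Measure.restrict_apply_univ]⟩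
  set w := (vol W).toReal with hwdef
  have hwge : c * (r - ε) ^ n ≤ w := hvol x₀ hx₀
  have hwpos : 0 < w := lt_of_lt_of_le hcpos hwge
  -- integrability
  have hfiV : Integrable f (vol.restrict V) := (hf.restrict V).integrable one_le_two
  have hfi2V : Integrable (fun x => f x ^ 2) (vol.restrict V) := (hf.restrict V).integrable_sq
  have hfiW : Integrable f (vol.restrict W) := (hf.restrict W).integrable one_le_two
  have hfi2W : Integrable (fun x => f x ^ 2) (vol.restrict W) := (hf.restrict W).integrable_sq
  set I1 := ∫ x in V, f x ∂vol with hI1def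
  set I2 := ∫ x in V, f x ^ 2 ∂vol with hI2def
  set J1 := ∫ y in W, f y ∂vol with hJ1def
  set J2 := ∫ y in W, f y ^ 2 ∂vol with hJ2def
  have hμ' : (vol.restrict V Set.univ).toReal = μ := by
    rw [Measure.restrict_apply_univ]; exact hμ.symm
  have hw' : (vol.restrict W Set.univ).toReal = w := by
    rw [Measure.restrict_apply_univ]
  have hinner : ∀ t : ℝ, ∫ y in W, (f y - t) ^ 2 ∂vol = J2 - 2 * t * J1 + w * t ^ 2 := by
    intro t
    rw [integral_sub_const_sq_aux _ f hfiW hfi2W t, hw']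
  -- Cauchy–Schwarz on W
  have hCS : J1 ^ 2 ≤ w * J2 := by
    have h0 : (0:ℝ) ≤ J2 - 2 * (J1 / w) * J1 + w * (J1 / w) ^ 2 := by
      rw [← hinner (J1 / w)]
      exact integral_nonneg fun y => sq_nonneg _
    have hw0 : w ≠ 0 := ne_of_gt hwpos
    have hkey : J2 - 2 * (J1 / w) * J1 + w * (J1 / w) ^ 2 = J2 - J1 ^ 2 / w := by
      field_simp; ring
    rw [hkey] at h0
    have h1 : J1 ^ 2 / w ≤ J2 := by linarith
    have h2 := (div_le_iff₀ hwpos).mp h1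
    linarith
  -- value of LHS
  have hLHS : ∫ x in V, (f x - a) ^ 2 ∂vol = I2 - 2 * a * I1 + μ * a ^ 2 := by
    rw [integral_sub_const_sq_aux _ f hfiV hfi2V a, hμ']
  -- inner integrals over W, rewritten
  have heq : (fun x => ∫ y in W, (f y - f x) ^ 2 ∂vol)
      = fun x => (J2 + (-(2 * J1)) * f x) + w * f x ^ 2 := by
    funext x
    rw [hinner (f x)]; ring
  have g1 : Integrable (fun x => J2 + -(2 * J1) * f x) (vol.restrict V) :=
    (integrable_const J2).add (hfiV.const_mul _)
  have g2 : Integrable (fun x => w * f x ^ 2) (vol.restrict V) := hfi2V.const_mul _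
  have hMidInt : Integrable (fun x => ∫ y in W, (f y - f x) ^ 2 ∂vol) (vol.restrict V) := by
    rw [heq]
    exact g1.add g2
  have hMid : ∫ x in V, (∫ y in W, (f y - f x) ^ 2 ∂vol) ∂vol
      = μ * J2 - 2 * J1 * I1 + w * I2 := by
    rw [heq, integral_add g1 g2,
      integral_add (integrable_const J2) (hfiV.const_mul _), integral_const_mul,
      integral_const_mul, integral_const, smul_eq_mul, measureReal_def, hμ']
    ring
  -- pointwise monotonicity
  have hpt : ∀ x ∈ V, (∫ y in W, (f y - f x) ^ 2 ∂vol) ≤ ∫ y in ball x r, (f y - f x) ^ 2 ∂vol := by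
    intro x hx
    haveI : IsFiniteMeasure (vol.restrict (ball x r)) :=
      ⟨by rw [Measure.restrict_apply_univ]; exact hvolfin x hx⟩
    have hfb : Integrable f (vol.restrict (ball x r)) :=
      (hf.restrict (ball x r)).integrable one_le_two
    have hfb2 : Integrable (fun y => f y ^ 2) (vol.restrict (ball x r)) :=
      (hf.restrict (ball x r)).integrable_sq
    have hintB : IntegrableOn (fun y => (f y - f x) ^ 2) (ball x r) vol := by
      have h : (fun y => (f y - f x) ^ 2) = fun y => (f y ^ 2 - (2 * f x) * f y) + f x ^ 2 :=
        funext fun y => by ring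
      rw [h]
      exact (hfb2.sub (hfb.const_mul _)).add (integrable_const _)
    exact setIntegral_mono_set hintB (Filter.Eventually.of_forall fun y => sq_nonneg _)
      (HasSubset.Subset.eventuallyLE (hWsub x hx))
  have hmono : ∫ x in V, (∫ y in W, (f y - f x) ^ 2 ∂vol) ∂vol
      ≤ ∫ x in V, ∫ y in ball x r, (f y - f x) ^ 2 ∂vol ∂vol :=
    setIntegral_mono_on hMidInt hint hVmeas hpt
  have hE0 : 0 ≤ ∫ x in V, ∫ y in ball x r, (f y - f x) ^ 2 ∂vol ∂vol :=
    setIntegral_nonneg hVmeas fun x _ => integral_nonneg fun y => sq_nonneg _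
  have hI1 : I1 = a * μ := by
    rw [ha]; field_simp
  calc ∫ x in V, (f x - a) ^ 2 ∂vol = I2 - 2 * a * I1 + μ * a ^ 2 := hLHS
    _ ≤ w⁻¹ * (μ * J2 - 2 * J1 * I1 + w * I2) := by
        rw [le_inv_mul_iff₀ hwpos]
        have key : 0 ≤ J2 - 2 * a * J1 + a ^ 2 * w := by
          nlinarith [hCS, sq_nonneg (J1 - a * w), hwpos]
        rw [hI1]
        nlinarith [mul_nonneg hμpos.le key]
    _ = w⁻¹ * ∫ x in V, (∫ y in W, (f y - f x) ^ 2 ∂vol) ∂vol := by rw [hMid]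
    _ ≤ w⁻¹ * ∫ x in V, ∫ y in ball x r, (f y - f x) ^ 2 ∂vol ∂vol :=
        mul_le_mul_of_nonneg_left hmono (inv_nonneg.mpr hwpos.le)
    _ ≤ (c * (r - ε) ^ n)⁻¹ * ∫ x in V, ∫ y in ball x r, (f y - f x) ^ 2 ∂vol ∂vol :=
        mul_le_mul_of_nonneg_right (inv_anti₀ hcpos hwge) hE0
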